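/- Let t > 0 and let γ_t be the Gaussian measure on ℝ with mean 0 and variance t. Then for every s ∈ ℝ and every f ∈ L²(ℝ; ℂ) with ‖f‖_{H^{s+2}} < ∞, the averaged mid-point propagator deviation satisfies ∫_ℝ ‖(S^{mid}_x f) − f‖_{H^s}² dγ_t(x) ≤ t · ‖f‖_{H^{s+2}}² (this is the estimate E‖(½(I+S_{n,δt}) − I)u‖²_{H^s} ≲ δt ‖u‖²_{H^{s+2}} used in the mean-square error analysis of the mid-point scheme, with x playing the role of the Brownian increment δW_n). -/

import Mathlib

open MeasureTheory Complex Real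
open scoped ENNReal NNReal FourierTransform ComplexConjugate

noncomputable section

/-- `L²(ℝ; ℂ)`. -/
abbrev L2 : Type := Lp ℂ 2 (volume : Measure ℝ)

/-- `F` is the Fourier–Plancherel transform on `L²(ℝ; ℂ)`: a unitary operator that agrees
with the Fourier integral `𝓕 f (ξ) = ∫ e^{−2πixξ} f(x) dx` on `L¹ ∩ L²`. -/
def IsFourierPlancherel (F : L2 ≃ₗᵢ[ℂ] L2) : Prop :=
  ∀ (f : ℝ → ℂ) (_ : Integrable f (volume : Measure ℝ))
    (hf2 : MemLp f 2 (volume : Measure ℝ)),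
    (F (hf2.toLp f) : ℝ → ℂ) =ᵐ[volume] 𝓕 f

/-- Multiplication by a bounded continuous symbol maps `L²` to `L²`. -/
lemma memℒp_mul_symbol (m : ℝ → ℂ) (hm : Continuous m) (hm1 : ∀ ξ, ‖m ξ‖ ≤ 1)
    (g : L2) : MemLp (fun ξ => m ξ * (g : ℝ → ℂ) ξ) 2 (volume : Measure ℝ) := by
  refine ⟨hm.aestronglyMeasurable.mul (Lp.aestronglyMeasurable g), ?_⟩
  refine lt_of_le_of_lt (eLpNorm_mono fun x => ?_) (Lp.eLpNorm_lt_top g)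
  rw [norm_mul]
  calc ‖m x‖ * ‖(g : ℝ → ℂ) x‖ ≤ 1 * ‖(g : ℝ → ℂ) x‖ := by
        gcongr; exact hm1 x
    _ = ‖(g : ℝ → ℂ) x‖ := one_mul _

/-- The Fourier multiplier operator `f ↦ 𝓕⁻¹ (m ⬝ 𝓕 f)` with bounded continuous symbol. -/
def fourierMult (F : L2 ≃ₗᵢ[ℂ] L2) (m : ℝ → ℂ) (hm : Continuous m)
    (hm1 : ∀ ξ, ‖m ξ‖ ≤ 1) (f : L2) : L2 :=
  F.symm ((memℒp_mul_symbol m hm hm1 (F f)).toLp _)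

/-- The squared `H^s` norm `‖f‖²_{H^s} = ∫ (1+|ξ|²)^s |𝓕f(ξ)|² dξ ∈ [0,∞]`. -/
def HsNormSq (F : L2 ≃ₗᵢ[ℂ] L2) (s : ℝ) (f : L2) : ℝ≥0∞ :=
  ∫⁻ ξ : ℝ, ENNReal.ofReal ((1 + |ξ| ^ 2) ^ s) * (‖(F f : ℝ → ℂ) ξ‖₊ : ℝ≥0∞) ^ 2

/-- The `H^s` norm `‖f‖_{H^s} ∈ [0,∞]`. -/
def HsNorm (F : L2 ≃ₗᵢ[ℂ] L2) (s : ℝ) (f : L2) : ℝ≥0∞ :=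
  HsNormSq F s f ^ (1 / 2 : ℝ)

lemma Sprop_symbol_cont (τ : ℝ) :
    Continuous fun ξ : ℝ => Complex.exp (-Complex.I * (τ : ℂ) * (ξ : ℂ) ^ 2) := by
  fun_prop

lemma Sprop_symbol_norm (τ : ℝ) (ξ : ℝ) :
    ‖Complex.exp (-Complex.I * (τ : ℂ) * (ξ : ℂ) ^ 2)‖ ≤ 1 := by
  have h : -Complex.I * (τ : ℂ) * (ξ : ℂ) ^ 2 = ((-(τ * ξ ^ 2) : ℝ) : ℂ) * Complex.I := by
    push_cast; ring
  rw [h, Complex.norm_exp_ofReal_mul_I]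

/-- The linear propagator `S_τ = 𝓕⁻¹ e^{−iτ|ξ|²} 𝓕` of `i du + Δu ∘ dW = 0`. -/
def Sprop (F : L2 ≃ₗᵢ[ℂ] L2) (τ : ℝ) : L2 → L2 :=
  fourierMult F (fun ξ : ℝ => Complex.exp (-Complex.I * (τ : ℂ) * (ξ : ℂ) ^ 2))
    (Sprop_symbol_cont τ) (Sprop_symbol_norm τ)

/-- The mid-point symbol `ξ ↦ (1 − i(c/2)ξ²)/(1 + i(c/2)ξ²)`. -/
def midSymb (c : ℝ) (ξ : ℝ) : ℂ :=
  (1 - Complex.I * ((c : ℂ) / 2) * (ξ : ℂ) ^ 2) / (1 + Complex.I * ((c : ℂ) / 2) * (ξ : ℂ) ^ 2)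

lemma add_ne (a : ℝ) : (1 : ℂ) + (a : ℂ) * Complex.I ≠ 0 := by
  intro h
  have := congrArg Complex.re h
  simp at this

lemma sub_ne (a : ℝ) : (1 : ℂ) - (a : ℂ) * Complex.I ≠ 0 := by
  intro h
  have := congrArg Complex.re h
  simp at this

lemma conj_eq (a : ℝ) : (starRingEnd ℂ) ((1 : ℂ) - (a : ℂ) * Complex.I)
    = 1 + (a : ℂ) * Complex.I := by
  rw [map_sub, map_mul, Complex.conj_ofReal, Complex.conj_I, map_one]
  ring

lemma key (c ξ : ℝ) :
    Complex.I * ((c : ℂ) / 2) * (ξ : ℂ) ^ 2 = ((c / 2 * ξ ^ 2 : ℝ) : ℂ) * Complex.I := by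
  push_cast; ring

lemma midSymb_cont (c : ℝ) : Continuous (midSymb c) := by
  unfold midSymb
  apply Continuous.div
  · fun_prop
  · fun_prop
  · intro ξ
    rw [key]
    exact add_ne _

lemma midSymb_norm (c ξ : ℝ) : ‖midSymb c ξ‖ = 1 := by
  unfold midSymb
  rw [key, ← conj_eq, norm_div, Complex.norm_conj, div_self]
  exact norm_ne_zero_iff.mpr (sub_ne _)

/-- The one-step linear mid-point propagator `S^{mid}_c = (I − i(c/2)Δ)⁻¹(I + i(c/2)Δ)`,
realized as the Fourier multiplier with symbol `midSymb c`. -/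
def Smid (F : L2 ≃ₗᵢ[ℂ] L2) (c : ℝ) : L2 → L2 :=
  fourierMult F (midSymb c) (midSymb_cont c) (fun ξ => le_of_eq (midSymb_norm c ξ))

section AuxGauss

open Set

lemma myGamma32 : Real.Gamma (3/2) = Real.sqrt π / 2 := by
  have h : (3/2 : ℝ) = 1/2 + 1 := by norm_num
  rw [h, Real.Gamma_add_one (by norm_num), Real.Gamma_one_half_eq]
  ring

lemma myInt_Ioi {b : ℝ} (hb : 0 < b) :
    ∫ x in Ioi (0:ℝ), x^2 * Real.exp (-b * x^2)
      = (1/b)^((3:ℝ)/2) * Real.sqrt π / 4 := by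
  have key := integral_comp_rpow_Ioi_of_pos
    (g := fun y => Real.sqrt y / 2 * Real.exp (-b * y)) (p := 2) two_pos
  have h1 : ∀ x ∈ Ioi (0:ℝ),
      ((2:ℝ) * x ^ ((2:ℝ) - 1)) • (Real.sqrt (x ^ (2:ℝ)) / 2 * Real.exp (-b * x ^ (2:ℝ)))
        = x^2 * Real.exp (-b * x^2) := by
    intro x hx
    have hx0 : (0:ℝ) < x := hx
    rw [Real.rpow_two, show (2:ℝ) - 1 = 1 by norm_num, Real.rpow_one,
      Real.sqrt_sq hx0.le, smul_eq_mul]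
    ring
  rw [setIntegral_congr_fun measurableSet_Ioi h1] at key
  rw [key]
  have h2 : ∀ y ∈ Ioi (0:ℝ),
      Real.sqrt y / 2 * Real.exp (-b * y)
        = (1/2 : ℝ) * (y ^ ((3:ℝ)/2 - 1) * Real.exp (-(b * y))) := by
    intro y hy
    rw [show (3:ℝ)/2 - 1 = 1/2 by norm_num, Real.sqrt_eq_rpow]
    ring
  rw [setIntegral_congr_fun measurableSet_Ioi h2, integral_const_mul,
    integral_rpow_mul_exp_neg_mul_Ioi (by norm_num) hb, myGamma32]
  ring

lemma myIntegrable {b : ℝ} (hb : 0 < b) :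
    Integrable fun x : ℝ => x^2 * Real.exp (-b * x^2) := by
  have := integrable_rpow_mul_exp_neg_mul_sq hb (s := 2) (by norm_num)
  simpa [Real.rpow_two] using this

lemma myInt_real {b : ℝ} (hb : 0 < b) :
    ∫ x : ℝ, x^2 * Real.exp (-b * x^2)
      = (1/b)^((3:ℝ)/2) * Real.sqrt π / 2 := by
  have hint := myIntegrable hb
  have hsplit := intervalIntegral.integral_Iic_add_Ioi (b := (0:ℝ)) (μ := volume)
    hint.integrableOn hint.integrableOn
  have hneg : ∫ x in Iic (0:ℝ), x^2 * Real.exp (-b * x^2)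
      = ∫ x in Ioi (0:ℝ), x^2 * Real.exp (-b * x^2) := by
    rw [← neg_zero, ← integral_comp_neg_Ioi]
    simp
  rw [← hsplit, hneg, myInt_Ioi hb]
  ring

lemma myPdfEq {t : ℝ} (ht : 0 < t) (x : ℝ) :
    x^2 * ProbabilityTheory.gaussianPDFReal 0 t.toNNReal x
      = (Real.sqrt (2 * π * t))⁻¹ * (x^2 * Real.exp (-(2*t)⁻¹ * x^2)) := by
  have hvt : ((t.toNNReal : ℝ)) = t := Real.coe_toNNReal t ht.le
  rw [ProbabilityTheory.gaussianPDFReal, hvt]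
  rw [show -(x - 0)^2 / (2*t) = -(2*t)⁻¹ * x^2 by field_simp; ring]
  ring

lemma myMoment {t : ℝ} (ht : 0 < t) :
    ∫ x : ℝ, x^2 * ProbabilityTheory.gaussianPDFReal 0 t.toNNReal x = t := by
  have hb : (0:ℝ) < (2*t)⁻¹ := by positivity
  simp_rw [myPdfEq ht]
  rw [integral_const_mul, myInt_real hb]
  have h2t : (0:ℝ) < 2 * t := by positivity
  rw [show (1 / (2*t)⁻¹ : ℝ) = 2*t by field_simp]
  rw [show ((3:ℝ)/2) = 1 + 1/2 by norm_num,
    Real.rpow_add h2t, Real.rpow_one, ← Real.sqrt_eq_rpow]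
  have hs : Real.sqrt (2*π*t) = Real.sqrt (2*t) * Real.sqrt π := by
    rw [show 2*π*t = (2*t)*π by ring, Real.sqrt_mul h2t.le]
  rw [hs]
  have h1 : Real.sqrt (2*t) ≠ 0 := by positivity
  have h2 : Real.sqrt π ≠ 0 := by positivity
  have h3 : Real.sqrt (2*t) * Real.sqrt (2*t) = 2*t := Real.mul_self_sqrt h2t.le
  field_simp

lemma myMomentIntegrable {t : ℝ} (ht : 0 < t) :
    Integrable fun x : ℝ => x^2 * ProbabilityTheory.gaussianPDFReal 0 t.toNNReal x := by
  have hb : (0:ℝ) < (2*t)⁻¹ := by positivity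
  refine ((myIntegrable hb).const_mul ((Real.sqrt (2 * π * t))⁻¹)).congr ?_
  exact Filter.Eventually.of_forall fun x => (myPdfEq ht x).symm

lemma myGaussSq {t : ℝ} (ht : 0 < t) :
    ∫⁻ x : ℝ, ENNReal.ofReal (x^2) ∂(ProbabilityTheory.gaussianReal 0 t.toNNReal)
      = ENNReal.ofReal t := by
  have hv : t.toNNReal ≠ 0 := by
    simp only [ne_eq, Real.toNNReal_eq_zero, not_le]
    exact ht
  have hmeas : Measurable fun x : ℝ => ENNReal.ofReal (x^2) := by measurability
  rw [ProbabilityTheory.gaussianReal_of_var_ne_zero 0 hv,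
    lintegral_withDensity_eq_lintegral_mul _ (ProbabilityTheory.measurable_gaussianPDF 0 _)
      hmeas]
  have heq : ∀ x : ℝ, (ProbabilityTheory.gaussianPDF 0 t.toNNReal * fun x => ENNReal.ofReal (x^2)) x
      = ENNReal.ofReal (x^2 * ProbabilityTheory.gaussianPDFReal 0 t.toNNReal x) := by
    intro x
    simp only [Pi.mul_apply, ProbabilityTheory.gaussianPDF]
    rw [← ENNReal.ofReal_mul (ProbabilityTheory.gaussianPDFReal_nonneg 0 _ x), mul_comm]
  simp_rw [heq]
  rw [← MeasureTheory.ofReal_integral_eq_lintegral_ofReal (myMomentIntegrable ht)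
    (Filter.Eventually.of_forall fun x =>
      mul_nonneg (sq_nonneg x) (ProbabilityTheory.gaussianPDFReal_nonneg 0 _ x)),
    myMoment ht]

end AuxGauss

lemma coe_smid (F : L2 ≃ₗᵢ[ℂ] L2) (x : ℝ) (f : L2) :
    (F (Smid F x f - f) : ℝ → ℂ)
      =ᵐ[volume] fun ξ => (midSymb x ξ - 1) * (F f : ℝ → ℂ) ξ := by
  have h1 : (F (Smid F x f) : ℝ → ℂ)
      =ᵐ[volume] fun ξ => midSymb x ξ * (F f : ℝ → ℂ) ξ := by
    unfold Smid fourierMult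
    rw [LinearIsometryEquiv.apply_symm_apply]
    exact (memℒp_mul_symbol (midSymb x) (midSymb_cont x)
      (fun ξ => le_of_eq (midSymb_norm x ξ)) (F f)).coeFn_toLp
  have h2 : (F (Smid F x f - f) : ℝ → ℂ)
      =ᵐ[volume] fun ξ => (F (Smid F x f) : ℝ → ℂ) ξ - (F f : ℝ → ℂ) ξ := by
    rw [map_sub]
    exact Lp.coeFn_sub _ _
  filter_upwards [h1, h2] with ξ hξ1 hξ2
  rw [hξ2, hξ1]
  ring

lemma midSymb_sub_one_norm (c ξ : ℝ) : ‖midSymb c ξ - 1‖ ≤ |c| * ξ^2 := by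
  have hden : (1:ℂ) + Complex.I * ((c : ℂ) / 2) * (ξ : ℂ) ^ 2 ≠ 0 := by
    rw [key]; exact add_ne _
  have hm : midSymb c ξ - 1
      = -2 * (Complex.I * ((c : ℂ) / 2) * (ξ : ℂ) ^ 2)
        / (1 + Complex.I * ((c : ℂ) / 2) * (ξ : ℂ) ^ 2) := by
    rw [midSymb, eq_div_iff hden, sub_mul, div_mul_cancel₀ _ hden]
    ring
  have hnorm_den : 1 ≤ ‖(1:ℂ) + Complex.I * ((c : ℂ) / 2) * (ξ : ℂ) ^ 2‖ := by
    rw [key]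
    have h2 : ((1:ℂ) + ((c / 2 * ξ ^ 2 : ℝ) : ℂ) * Complex.I).re = 1 := by
      simp only [Complex.add_re, Complex.one_re, Complex.mul_re, Complex.I_re, Complex.I_im,
        Complex.ofReal_re, Complex.ofReal_im]
      ring
    calc (1:ℝ) = |((1:ℂ) + ((c / 2 * ξ ^ 2 : ℝ) : ℂ) * Complex.I).re| := by
          rw [h2]; norm_num
      _ ≤ ‖(1:ℂ) + ((c / 2 * ξ ^ 2 : ℝ) : ℂ) * Complex.I‖ :=
          Complex.abs_re_le_norm _
  have hz : ‖Complex.I * ((c : ℂ) / 2) * (ξ : ℂ) ^ 2‖ = |c| / 2 * ξ^2 := by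
    rw [key, norm_mul, Complex.norm_I, Complex.norm_real, Real.norm_eq_abs, mul_one,
      abs_mul, _root_.abs_of_nonneg (sq_nonneg ξ), abs_div]
    norm_num
  rw [hm, norm_div, norm_mul]
  calc ‖(-2 : ℂ)‖ * ‖Complex.I * ((c : ℂ) / 2) * (ξ : ℂ) ^ 2‖
        / ‖(1:ℂ) + Complex.I * ((c : ℂ) / 2) * (ξ : ℂ) ^ 2‖
      ≤ ‖(-2 : ℂ)‖ * ‖Complex.I * ((c : ℂ) / 2) * (ξ : ℂ) ^ 2‖ / 1 := by
        apply div_le_div_of_nonneg_left _ _ hnorm_den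
        · positivity
        · norm_num
    _ = |c| * ξ^2 := by
        have h2 : ‖(-2:ℂ)‖ = 2 := by norm_num
        rw [hz, h2, div_one]
        ring

lemma keybound (F : L2 ≃ₗᵢ[ℂ] L2) (x : ℝ) (f : L2) (s : ℝ) :
    HsNormSq F s (Smid F x f - f) ≤ ENNReal.ofReal (x^2) * HsNormSq F (s+2) f := by
  rw [HsNormSq, HsNormSq, ← lintegral_const_mul' _ _ ENNReal.ofReal_ne_top]
  apply lintegral_mono_ae
  filter_upwards [coe_smid F x f] with ξ hξ
  rw [hξ]
  set g := (F f : ℝ → ℂ) ξ with hg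
  have hw : (0:ℝ) < 1 + |ξ|^2 := by positivity
  have e1 : ((‖(midSymb x ξ - 1) * g‖₊ : ℝ≥0∞)) ^ 2
      = ENNReal.ofReal (‖midSymb x ξ - 1‖^2 * ‖g‖^2) := by
    rw [← enorm_eq_nnnorm, ← ofReal_norm, ← ENNReal.ofReal_pow (norm_nonneg _), norm_mul, mul_pow]
  have e2 : ((‖g‖₊ : ℝ≥0∞)) ^ 2 = ENNReal.ofReal (‖g‖^2) := by
    rw [← enorm_eq_nnnorm, ← ofReal_norm, ← ENNReal.ofReal_pow (norm_nonneg _)]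
  rw [e1, e2, ← ENNReal.ofReal_mul (Real.rpow_nonneg hw.le s),
    ← ENNReal.ofReal_mul (Real.rpow_nonneg hw.le (s+2)),
    ← ENNReal.ofReal_mul (sq_nonneg x)]
  apply ENNReal.ofReal_le_ofReal
  have hmb : ‖midSymb x ξ - 1‖^2 ≤ x^2 * ξ^4 := by
    have h := midSymb_sub_one_norm x ξ
    have h2 : ‖midSymb x ξ - 1‖^2 ≤ (|x| * ξ^2)^2 := by
      apply pow_le_pow_left₀ (norm_nonneg _) h
    calc ‖midSymb x ξ - 1‖^2 ≤ (|x| * ξ^2)^2 := h2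
      _ = x^2 * ξ^4 := by rw [mul_pow, _root_.sq_abs]; ring
  have h2 : (1 + |ξ|^2) ^ (s+2) = (1 + |ξ|^2) ^ s * (1 + |ξ|^2)^2 := by
    rw [Real.rpow_add hw, Real.rpow_two]
  have h3 : ξ^4 ≤ (1 + |ξ|^2)^2 := by nlinarith [_root_.sq_abs ξ, sq_nonneg ξ, sq_nonneg (ξ^2)]
  have hAs : (0:ℝ) ≤ (1 + |ξ|^2) ^ s := Real.rpow_nonneg hw.le s
  calc (1 + |ξ|^2) ^ s * (‖midSymb x ξ - 1‖^2 * ‖g‖^2)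
      ≤ (1 + |ξ|^2) ^ s * ((x^2 * ξ^4) * ‖g‖^2) := by
        apply mul_le_mul_of_nonneg_left _ hAs
        apply mul_le_mul_of_nonneg_right hmb (sq_nonneg _)
    _ = x^2 * (((1 + |ξ|^2) ^ s * ξ^4) * ‖g‖^2) := by ring
    _ ≤ x^2 * (((1 + |ξ|^2) ^ s * (1 + |ξ|^2)^2) * ‖g‖^2) := by
        apply mul_le_mul_of_nonneg_left _ (sq_nonneg x)
        apply mul_le_mul_of_nonneg_right _ (sq_nonneg _)
        exact mul_le_mul_of_nonneg_left h3 hAs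
    _ = x^2 * ((1 + |ξ|^2) ^ (s+2) * ‖g‖^2) := by rw [h2]

open ProbabilityTheory in
/-- for the centered Gaussian measure `γ_t` with variance `t > 0` and any
`f` with finite `H^{s+2}` norm, the averaged mid-point propagator deviation satisfies
`∫ ‖S^{mid}_x f − f‖²_{H^s} dγ_t(x) ≤ t ‖f‖²_{H^{s+2}}`. -/
theorem stmt_6 (F : L2 ≃ₗᵢ[ℂ] L2) (hF : IsFourierPlancherel F)
    (t : ℝ) (ht : 0 < t) (s : ℝ) (f : L2) (hf : HsNorm F (s + 2) f < ⊤) :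
    ∫⁻ x : ℝ, HsNormSq F s (Smid F x f - f) ∂(gaussianReal 0 t.toNNReal)
      ≤ ENNReal.ofReal t * HsNormSq F (s + 2) f := by
  calc ∫⁻ x : ℝ, HsNormSq F s (Smid F x f - f) ∂(gaussianReal 0 t.toNNReal)
      ≤ ∫⁻ x : ℝ, ENNReal.ofReal (x^2) * HsNormSq F (s+2) f ∂(gaussianReal 0 t.toNNReal) :=
        lintegral_mono fun x => keybound F x f s
    _ = (∫⁻ x : ℝ, ENNReal.ofReal (x^2) ∂(gaussianReal 0 t.toNNReal)) * HsNormSq F (s+2) f :=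
        lintegral_mul_const _ (by measurability)
    _ = ENNReal.ofReal t * HsNormSq F (s + 2) f := by rw [myGaussSq ht]

end
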